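/- Let φ ∈ L^∞(𝕋ⁿ). If the Toeplitz operator T_{φ,△ₙ} is compact on H²(∂_d△ₙ), then φ = 0 almost everywhere (so T_{φ,△ₙ} = 0). In other words, the only compact Toeplitz operator on H²(∂_d△ₙ) is the zero operator. -/

import Mathlib

open MeasureTheory Filter Topology ComplexConjugate

noncomputable section

instance fact_one_pos : Fact ((0:ℝ) < 1) := ⟨one_pos⟩

abbrev Torus (n : ℕ) := Fin n → AddCircle (1 : ℝ)

abbrev L2T (n : ℕ) := Lp ℂ 2 (volume : Measure (Torus n))

abbrev LinfT (n : ℕ) := Lp ℂ ⊤ (volume : Measure (Torus n))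

def char {n : ℕ} (α : Fin n → ℤ) : Torus n → ℂ := fun x => ∏ j, fourier (α j) (x j)

lemma char_continuous {n : ℕ} (α : Fin n → ℤ) : Continuous (char α) :=
  continuous_finsetProd _ fun j _ => (fourier (α j)).continuous.comp (continuous_apply j)

lemma char_memLp {n : ℕ} (α : Fin n → ℤ) (p : ENNReal) :
    MemLp (char α) p (volume : Measure (Torus n)) := by
  refine (memLp_top_of_bound ((char_continuous α).aestronglyMeasurable) 1 ?_).mono_exponent le_top
  filter_upwards with x
  simp only [char, norm_prod]
  calc ∏ j, ‖fourier (α j) (x j)‖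
      = ∏ j : Fin n, (1:ℝ) := by
        refine Finset.prod_congr rfl fun j _ => ?_
        rw [fourier_apply]; exact Circle.norm_coe _
    _ ≤ 1 := by simp

def charL2 {n : ℕ} (α : Fin n → ℤ) : L2T n := (char_memLp α 2).toLp (char α)

def hardyT (n : ℕ) : Submodule ℂ (L2T n) :=
  (Submodule.span ℂ
    (charL2 '' {α : Fin n → ℤ | ∀ k : Fin n, 0 ≤ (∑ j ∈ Finset.Iic k, α j) + (k.val : ℤ)})).topologicalClosure

def hardyD (n : ℕ) : Submodule ℂ (L2T n) :=
  (Submodule.span ℂ (charL2 '' {α : Fin n → ℤ | ∀ j, 0 ≤ α j})).topologicalClosure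

instance hardyT.completeSpace (n : ℕ) : CompleteSpace (hardyT n) :=
  (Submodule.isClosed_topologicalClosure _).completeSpace_coe

instance hardyD.completeSpace (n : ℕ) : CompleteSpace (hardyD n) :=
  (Submodule.isClosed_topologicalClosure _).completeSpace_coe

def IsToeplitzOn {n : ℕ} (K : Submodule ℂ (L2T n)) (φ : Torus n → ℂ) (T : K →L[ℂ] K) : Prop :=
  ∀ f g : K,
    (inner ℂ ((g : L2T n)) ((T f : L2T n)) : ℂ) =
      ∫ x, conj ((g : L2T n) x) * (φ x * (f : L2T n) x) ∂volume

def IsCoordMult {n : ℕ} (j : Fin n) (M : hardyT n →L[ℂ] hardyT n) : Prop :=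
  ∀ f : hardyT n,
    ((M f : L2T n) : Torus n → ℂ) =ᵐ[volume]
      fun x => fourier 1 (x j) * ((f : L2T n) : Torus n → ℂ) x

def IsHankelT {n : ℕ} (φ : Torus n → ℂ) (H : hardyT n →L[ℂ] L2T n) : Prop :=
  (∀ f : hardyT n, H f ∈ (hardyT n)ᗮ) ∧
    ∀ f : hardyT n, ∀ g : L2T n, g ∈ (hardyT n)ᗮ →
      (inner ℂ g (H f) : ℂ) = ∫ x, conj (g x) * (φ x * (f : L2T n) x) ∂volume

def IsAnalyticSymbolF {n : ℕ} (φ : Torus n → ℂ) : Prop :=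
  ∀ α : Fin n → ℤ, (¬ ∀ k : Fin n, 0 ≤ ∑ j ∈ Finset.Iic k, α j) →
    ∫ x, φ x * char (-α) x ∂(volume : Measure (Torus n)) = 0

def IsInnerSymbolF {n : ℕ} (φ : Torus n → ℂ) : Prop :=
  IsAnalyticSymbolF φ ∧ ∀ᵐ x ∂(volume : Measure (Torus n)), ‖φ x‖ = 1

def tauMap {n : ℕ} (x : Torus n) : Torus n := fun j => ∑ k ∈ Finset.Ici j, x k

def sigmaMap {n : ℕ} (x : Torus n) : Torus n :=
  fun j => if h : (j : ℕ) + 1 < n then x j - x ⟨(j : ℕ) + 1, h⟩ else x j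

def jacF {n : ℕ} (x : Torus n) : ℂ := ∏ j : Fin n, fourier (j.val : ℤ) (x j)

def jacInvF {n : ℕ} (x : Torus n) : ℂ :=
  ∏ j : Fin n, fourier (if j.val = 0 then (0 : ℤ) else -1) (x j)

section Aux

lemma vol_eq_haar : (volume : Measure (AddCircle (1:ℝ))) = AddCircle.haarAddCircle := by
  rw [AddCircle.volume_eq_smul_haarAddCircle]
  simp

lemma integral_fourier1 (m : ℤ) :
    ∫ x : AddCircle (1:ℝ), fourier m x ∂volume = if m = 0 then 1 else 0 := by
  rw [vol_eq_haar]
  split_ifs with h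
  · subst h
    have : ⇑(fourier (T := (1:ℝ)) 0) = (fun _ => 1 : AddCircle (1:ℝ) → ℂ) := by
      ext1; exact fourier_zero
    rw [this, integral_const, probReal_univ]
    simp
  · exact integral_eq_zero_of_add_right_eq_neg
      (fourier_add_half_inv_index h one_pos)

instance torus_prob (n : ℕ) : IsProbabilityMeasure (volume : Measure (Torus n)) := by
  have : IsProbabilityMeasure (volume : Measure (AddCircle (1:ℝ))) := by
    rw [vol_eq_haar]; infer_instance
  rw [MeasureTheory.volume_pi]
  infer_instance

lemma integral_char {n : ℕ} (α : Fin n → ℤ) :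
    ∫ x, char α x ∂(volume : Measure (Torus n)) = if α = 0 then 1 else 0 := by
  have := MeasureTheory.integral_fintype_prod_eq_prod (𝕜 := ℂ)
    (fun j (x : AddCircle (1:ℝ)) => (fourier (α j) x : ℂ)) (μ := fun _ => volume)
  rw [← MeasureTheory.volume_pi] at this
  rw [show (∫ x, char α x ∂(volume : Measure (Torus n))) =
    ∫ x : (Fin n) → AddCircle (1:ℝ), ∏ j, (fourier (α j) (x j) : ℂ) from rfl, this]
  simp_rw [integral_fourier1]
  by_cases h : α = 0
  · subst h; simp
  · obtain ⟨j, hj⟩ := Function.ne_iff.mp h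
    rw [if_neg h]
    exact Finset.prod_eq_zero (Finset.mem_univ j) (by simpa using hj)

lemma char_mul {n : ℕ} (α β : Fin n → ℤ) (x : Torus n) :
    char α x * char β x = char (α + β) x := by
  rw [char, char, char, ← Finset.prod_mul_distrib]
  exact Finset.prod_congr rfl fun j _ => (fourier_add).symm

lemma conj_char {n : ℕ} (α : Fin n → ℤ) (x : Torus n) :
    conj (char α x) = char (-α) x := by
  rw [char, char, map_prod]
  exact Finset.prod_congr rfl fun j _ => (fourier_neg).symm

lemma char_zero_eq {n : ℕ} : char (0 : Fin n → ℤ) = fun _ => (1:ℂ) := by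
  ext x; simp [char, fourier_zero]

lemma orthonormal_charL2 {n : ℕ} : Orthonormal ℂ (charL2 (n := n)) := by
  rw [orthonormal_iff_ite]
  intro α β
  have h1 : (inner ℂ (charL2 α) (charL2 β) : ℂ) = ∫ x, conj (char α x) * char β x ∂volume := by
    rw [MeasureTheory.L2.inner_def]
    apply integral_congr_ae
    filter_upwards [(char_memLp α 2).coeFn_toLp, (char_memLp β 2).coeFn_toLp] with x hx hy
    show (inner ℂ (((char_memLp α 2).toLp (char α) : L2T n) x)
      (((char_memLp β 2).toLp (char β) : L2T n) x) : ℂ) = _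
    rw [hx, hy, RCLike.inner_apply']
  rw [h1]
  simp_rw [fun x => conj_char α x, fun x => char_mul (-α) β x]
  rw [integral_char]
  by_cases h : α = β
  · subst h; simp
  · rw [if_neg (by intro hc; apply h; have := congrArg (α + ·) hc; simpa using this.symm), if_neg h]

section Density
open Submodule Set

def charC {n : ℕ} (α : Fin n → ℤ) : C(Torus n, ℂ) := ⟨char α, char_continuous α⟩

def torusSubalgebra (n : ℕ) : StarSubalgebra ℂ C(Torus n, ℂ) where
  toSubalgebra := Algebra.adjoin ℂ (range (charC (n := n)))
  star_mem' := by
    show Algebra.adjoin ℂ (range (charC (n := n))) ≤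
      star (Algebra.adjoin ℂ (range (charC (n := n))))
    refine Algebra.adjoin_le ?_
    rintro - ⟨α, rfl⟩
    refine Algebra.subset_adjoin ⟨-α, ?_⟩
    ext x
    show char (-α) x = conj (char α x)
    rw [conj_char]

lemma torusSubalgebra_coe (n : ℕ) :
    Subalgebra.toSubmodule (torusSubalgebra n).toSubalgebra
      = span ℂ (range (charC (n := n))) := by
  apply Algebra.adjoin_eq_span_of_subset
  refine Subset.trans ?_ Submodule.subset_span
  intro x hx
  refine Submonoid.closure_induction (fun _ => id) ⟨0, ?_⟩ ?_ hx
  · ext1 z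
    show char 0 z = 1
    rw [char_zero_eq]
  · rintro - - - - ⟨α, rfl⟩ ⟨β, rfl⟩
    refine ⟨α + β, ?_⟩
    ext1 z
    exact (char_mul α β z).symm

lemma torusSubalgebra_separatesPoints (n : ℕ) : (torusSubalgebra n).SeparatesPoints := by
  intro x y hxy
  obtain ⟨j, hj⟩ := Function.ne_iff.mp hxy
  refine ⟨_, ⟨charC (Pi.single j 1), Algebra.subset_adjoin ⟨Pi.single j 1, rfl⟩, rfl⟩, ?_⟩
  have hval : ∀ z : Torus n, charC (Pi.single j 1) z = fourier 1 (z j) := by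
    intro z
    show char (Pi.single j 1) z = _
    rw [char]
    rw [Finset.prod_eq_single j (fun i _ hi => by simp [Pi.single_eq_of_ne hi, fourier_zero])
      (by simp)]
    simp
  dsimp only
  rw [hval, hval]
  simp_rw [fourier_one]
  intro hc
  rw [Circle.coe_inj] at hc
  exact hj (AddCircle.injective_toCircle one_ne_zero hc)

lemma span_charL2_closure_eq_top (n : ℕ) :
    (span ℂ (range (charL2 (n := n)))).topologicalClosure = ⊤ := by
  have h1 : (torusSubalgebra n).topologicalClosure = ⊤ :=
    ContinuousMap.starSubalgebra_topologicalClosure_eq_top_of_separatesPoints _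
      (torusSubalgebra_separatesPoints n)
  have h2 : (span ℂ (range (charC (n := n)))).topologicalClosure = ⊤ := by
    rw [← torusSubalgebra_coe]
    exact congr_arg (Subalgebra.toSubmodule <| StarSubalgebra.toSubalgebra ·) h1
  have h3 := (ContinuousMap.toLp_denseRange ℂ (volume : Measure (Torus n)) ℂ
    (by norm_num : (2 : ENNReal) ≠ ⊤)).topologicalClosure_map_submodule h2
  have hfun : charL2 (n := n) = fun α => ContinuousMap.toLp (E := ℂ) 2 volume ℂ (charC α) := by
    funext α
    apply Lp.ext
    exact (char_memLp α 2).coeFn_toLp.trans (ContinuousMap.coeFn_toLp volume (charC α)).symm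
  rw [← h3, map_span, ← range_comp, hfun]
  rfl

end Density

lemma phi_ae_zero {n : ℕ} (φ : LinfT n)
    (h : ∀ γ : Fin n → ℤ, ∫ x, φ x * char γ x ∂(volume : Measure (Torus n)) = 0) :
    ⇑φ =ᵐ[(volume : Measure (Torus n))] 0 := by
  have φmem2 : MemLp (⇑φ) 2 (volume : Measure (Torus n)) :=
    (Lp.memLp φ).mono_exponent le_top
  let Φ : L2T n := φmem2.toLp ⇑φ
  let F : L2T n →L[ℂ] ℂ := innerSL ℂ Φ
  have hFapp : ∀ g : L2T n, F g = (inner ℂ Φ g : ℂ) := fun g => rfl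
  have hker : ∀ α : Fin n → ℤ, charL2 α ∈ LinearMap.ker (F : L2T n →ₗ[ℂ] ℂ) := by
    intro α
    have key : (inner ℂ Φ (charL2 α) : ℂ) = ∫ x, conj (φ x) * char α x ∂volume := by
      rw [MeasureTheory.L2.inner_def]
      apply integral_congr_ae
      filter_upwards [φmem2.coeFn_toLp, (char_memLp α 2).coeFn_toLp] with x hx hy
      show (inner ℂ ((φmem2.toLp ⇑φ : L2T n) x) (((char_memLp α 2).toLp (char α) : L2T n) x) : ℂ) = _
      rw [hy, RCLike.inner_apply', hx]
    have h2 : ∫ x, conj (φ x) * char α x ∂(volume : Measure (Torus n)) = 0 := by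
      have hcnj := congrArg conj (h (-α))
      rw [← integral_conj] at hcnj
      simp only [map_zero] at hcnj
      rw [← hcnj]
      apply integral_congr_ae
      filter_upwards with x
      rw [map_mul, conj_char, neg_neg]
    exact LinearMap.mem_ker.mpr (by rw [ContinuousLinearMap.coe_coe, hFapp, key, h2])
  have hle : (Submodule.span ℂ (Set.range (charL2 (n := n)))) ≤ LinearMap.ker (F : L2T n →ₗ[ℂ] ℂ) := by
    rw [Submodule.span_le]
    rintro - ⟨α, rfl⟩
    exact hker α
  have hclosed : IsClosed (LinearMap.ker (F : L2T n →ₗ[ℂ] ℂ) : Set (L2T n)) :=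
    ContinuousLinearMap.isClosed_ker F
  have hcl : (Submodule.span ℂ (Set.range (charL2 (n := n)))).topologicalClosure
      ≤ LinearMap.ker (F : L2T n →ₗ[ℂ] ℂ) := Submodule.topologicalClosure_minimal _ hle hclosed
  rw [span_charL2_closure_eq_top] at hcl
  have hΦmem : Φ ∈ LinearMap.ker (F : L2T n →ₗ[ℂ] ℂ) := hcl Submodule.mem_top
  have hΦ0 : Φ = 0 := by
    have h0 : (inner ℂ Φ Φ : ℂ) = 0 := by rw [← hFapp]; exact LinearMap.mem_ker.mp hΦmem
    exact inner_self_eq_zero.mp h0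
  have h1 : ⇑φ =ᵐ[(volume : Measure (Torus n))] ⇑Φ := φmem2.coeFn_toLp.symm
  refine h1.trans ?_
  have : ⇑Φ =ᵐ[(volume : Measure (Torus n))] ⇑(0 : L2T n) := by rw [hΦ0]
  exact this.trans (Lp.coeFn_zero _ _ _)

lemma charL2_mem_hardyT {n : ℕ} {α : Fin n → ℤ}
    (hα : ∀ k : Fin n, 0 ≤ (∑ j ∈ Finset.Iic k, α j) + (k.val : ℤ)) :
    charL2 α ∈ hardyT n :=
  Submodule.le_topologicalClosure _ (Submodule.subset_span ⟨α, hα, rfl⟩)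

def shiftIdx {n : ℕ} [NeZero n] (γ : Fin n → ℤ) (k : ℕ) : Fin n → ℤ :=
  fun j => γ j + if j = 0 then (k : ℤ) else 0

lemma shiftIdx_mem {n : ℕ} [NeZero n] {γ : Fin n → ℤ}
    (hγ : ∀ m : Fin n, 0 ≤ (∑ j ∈ Finset.Iic m, γ j) + (m.val : ℤ)) (k : ℕ) :
    ∀ m : Fin n, 0 ≤ (∑ j ∈ Finset.Iic m, shiftIdx γ k j) + (m.val : ℤ) := by
  intro m
  have h0 : (0 : Fin n) ∈ Finset.Iic m := Finset.mem_Iic.mpr (Fin.zero_le m)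
  have hsum : ∑ j ∈ Finset.Iic m, shiftIdx γ k j
      = (∑ j ∈ Finset.Iic m, γ j) + k := by
    unfold shiftIdx
    rw [Finset.sum_add_distrib, Finset.sum_ite_eq' _ 0 (fun _ => (k : ℤ)), if_pos h0]
  rw [hsum]
  have := hγ m
  have hk : (0:ℤ) ≤ (k : ℤ) := Int.ofNat_nonneg k
  linarith

lemma shiftIdx_injective {n : ℕ} [NeZero n] (γ : Fin n → ℤ) :
    Function.Injective (shiftIdx γ) := by
  intro k₁ k₂ h
  have h0 := congrFun h 0
  simp only [shiftIdx, if_pos rfl, add_right_inj] at h0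
  exact_mod_cast h0

lemma shiftIdx_sub {n : ℕ} [NeZero n] (α β : Fin n → ℤ) (k : ℕ) :
    -(shiftIdx β k) + shiftIdx α k = α - β := by
  funext j
  simp only [shiftIdx, Pi.add_apply, Pi.neg_apply, Pi.sub_apply]
  ring

end Aux

/-- The only compact Toeplitz operator on `H²(∂_d△ₙ)` is the zero operator. -/
theorem stmt14 {n : ℕ} (hn : 2 ≤ n) (φ : LinfT n)
    (T : hardyT n →L[ℂ] hardyT n) (hT : IsToeplitzOn (hardyT n) (⇑φ) T)
    (hcpt : IsCompactOperator T) : φ = 0 ∧ T = 0 := by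
  haveI : NeZero n := ⟨by omega⟩
  -- the bounded linear map from hardyT into L2
  let S : hardyT n →L[ℂ] L2T n := (hardyT n).subtypeL.comp T
  have hScpt : IsCompactOperator (⇑S) := by
    have := hcpt.continuous_comp (continuous_subtype_val :
      Continuous (fun f : hardyT n => (f : L2T n)))
    exact this
  -- Step 1: all Fourier coefficients of φ vanish
  have key : ∀ γ : Fin n → ℤ, ∫ x, φ x * char γ x ∂(volume : Measure (Torus n)) = 0 := by
    intro γ
    set M : ℤ := ((Finset.univ.sup fun j => (γ j).natAbs : ℕ) : ℤ) with hM
    have hMγ : ∀ j, 0 ≤ M + γ j := by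
      intro j
      have h1 : (γ j).natAbs ≤ Finset.univ.sup fun j => (γ j).natAbs :=
        Finset.le_sup (f := fun j => (γ j).natAbs) (Finset.mem_univ j)
      have h2 : -γ j ≤ ((γ j).natAbs : ℤ) := by
        rcases Int.natAbs_eq (γ j) with h | h <;> omega
      have h3 : ((γ j).natAbs : ℤ) ≤ M := by rw [hM]; exact_mod_cast h1
      omega
    set β : Fin n → ℤ := fun _ => M with hβ
    set α : Fin n → ℤ := fun j => M + γ j with hα
    have hMnonneg : 0 ≤ M := Int.ofNat_nonneg _
    have hβmem : ∀ m : Fin n, 0 ≤ (∑ j ∈ Finset.Iic m, β j) + (m.val : ℤ) := by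
      intro m
      have ha : 0 ≤ ∑ j ∈ Finset.Iic m, β j :=
        Finset.sum_nonneg fun j _ => hMnonneg
      have hb : (0:ℤ) ≤ (m.val : ℤ) := Int.ofNat_nonneg _
      linarith
    have hαmem : ∀ m : Fin n, 0 ≤ (∑ j ∈ Finset.Iic m, α j) + (m.val : ℤ) := by
      intro m
      have h1 : 0 ≤ ∑ j ∈ Finset.Iic m, α j :=
        Finset.sum_nonneg fun j _ => hMγ j
      have h2 : (0:ℤ) ≤ (m.val : ℤ) := Int.ofNat_nonneg _
      linarith
    -- the shifted sequences
    let u : ℕ → hardyT n := fun k =>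
      ⟨charL2 (shiftIdx α k), charL2_mem_hardyT (shiftIdx_mem hαmem k)⟩
    let v : ℕ → hardyT n := fun k =>
      ⟨charL2 (shiftIdx β k), charL2_mem_hardyT (shiftIdx_mem hβmem k)⟩
    -- the matrix entries are constant in k
    have hconst : ∀ k : ℕ,
        (inner ℂ ((v k : L2T n)) (S (u k)) : ℂ) = ∫ x, φ x * char (α - β) x ∂volume := by
      intro k
      have h1 := hT (u k) (v k)
      have h2 : (inner ℂ ((v k : L2T n)) (S (u k)) : ℂ)
          = (inner ℂ ((v k : L2T n)) ((T (u k) : hardyT n) : L2T n) : ℂ) := rfl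
      rw [h2, h1]
      apply integral_congr_ae
      filter_upwards [(char_memLp (shiftIdx α k) 2).coeFn_toLp,
        (char_memLp (shiftIdx β k) 2).coeFn_toLp] with x hxα hxβ
      show conj ((((char_memLp (shiftIdx β k) 2).toLp _ : L2T n)) x)
        * (φ x * (((char_memLp (shiftIdx α k) 2).toLp _ : L2T n)) x) = _
      rw [hxα, hxβ, conj_char]
      rw [mul_comm (φ x) _, ← mul_assoc, char_mul, shiftIdx_sub]
      ring
    -- u k, v k are unit vectors
    have hnormu : ∀ k, ‖u k‖ = 1 := fun k => orthonormal_charL2.1 (shiftIdx α k)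
    -- compactness: extract convergent subsequence of S (u k)
    have hScpt' : IsCompactOperator ⇑(S.toLinearMap) := hScpt
    obtain ⟨K, hK, hKsub⟩ :=
      IsCompactOperator.image_ball_subset_compact (𝕜₁ := ℂ)
        (f := S.toLinearMap) hScpt' 2
    have hmemK : ∀ k, S (u k) ∈ K := by
      intro k
      apply hKsub
      exact ⟨u k, by rw [Metric.mem_ball, dist_zero_right, hnormu]; norm_num, rfl⟩
    obtain ⟨w, hwK, ψ, hψmono, hconv⟩ := hK.tendsto_subseq hmemK
    -- weak nullity of v along w
    have hsummable : Summable fun k : ℕ => ‖(inner ℂ (charL2 (shiftIdx β k)) w : ℂ)‖ ^ 2 := by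
      have h1 : Summable fun δ : Fin n → ℤ => ‖(inner ℂ (charL2 δ) w : ℂ)‖ ^ 2 :=
        orthonormal_charL2.inner_products_summable w
      exact h1.comp_injective (shiftIdx_injective β)
    have hnull : Tendsto (fun k : ℕ => (inner ℂ ((v k : L2T n)) w : ℂ)) atTop (𝓝 0) := by
      rw [tendsto_zero_iff_norm_tendsto_zero]
      have h2 : Tendsto (fun k : ℕ => ‖(inner ℂ (charL2 (shiftIdx β k)) w : ℂ)‖ ^ 2)
          atTop (𝓝 0) := hsummable.tendsto_atTop_zero
      have h3 := (Real.continuous_sqrt.tendsto 0).comp h2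
      simp only [Function.comp_def, Real.sqrt_zero] at h3
      have h4 : (fun k : ℕ => Real.sqrt (‖(inner ℂ (charL2 (shiftIdx β k)) w : ℂ)‖ ^ 2))
          = fun k : ℕ => ‖(inner ℂ (charL2 (shiftIdx β k)) w : ℂ)‖ := by
        funext k
        exact Real.sqrt_sq (norm_nonneg _)
      rw [h4] at h3
      exact h3
    -- the constant sequence converges to 0
    have hstrong : Tendsto (fun j : ℕ => ‖S (u (ψ j)) - w‖) atTop (𝓝 0) := by
      simp only [Function.comp_def] at hconv
      rw [tendsto_iff_norm_sub_tendsto_zero] at hconv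
      exact hconv
    have hdiff : Tendsto (fun j : ℕ => (inner ℂ ((v (ψ j) : L2T n)) (S (u (ψ j)) - w) : ℂ))
        atTop (𝓝 0) := by
      apply squeeze_zero_norm _ hstrong
      intro j
      calc ‖(inner ℂ ((v (ψ j) : L2T n)) (S (u (ψ j)) - w) : ℂ)‖
          ≤ ‖(v (ψ j) : L2T n)‖ * ‖S (u (ψ j)) - w‖ := norm_inner_le_norm _ _
        _ = ‖S (u (ψ j)) - w‖ := by
            have hv1 : ‖((v (ψ j)) : L2T n)‖ = 1 := orthonormal_charL2.1 (shiftIdx β (ψ j))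
            rw [hv1, one_mul]
    have hwnull : Tendsto (fun j : ℕ => (inner ℂ ((v (ψ j) : L2T n)) w : ℂ)) atTop (𝓝 0) :=
      hnull.comp hψmono.tendsto_atTop
    have hfull : Tendsto (fun j : ℕ => (inner ℂ ((v (ψ j) : L2T n)) (S (u (ψ j))) : ℂ))
        atTop (𝓝 0) := by
      have := hdiff.add hwnull
      rw [add_zero] at this
      convert this using 2 with j
      rw [← inner_add_right]
      congr 1
      abel
    have hconst' : Tendsto (fun j : ℕ => (inner ℂ ((v (ψ j) : L2T n)) (S (u (ψ j))) : ℂ))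
        atTop (𝓝 (∫ x, φ x * char (α - β) x ∂volume)) := by
      simp_rw [fun j => hconst (ψ j)]
      exact tendsto_const_nhds
    have hzero := tendsto_nhds_unique hconst' hfull
    have hγeq : α - β = γ := by funext j; simp [hα, hβ]
    rw [hγeq] at hzero
    exact hzero
  -- Step 2: φ = 0 a.e.
  have hae : ⇑φ =ᵐ[(volume : Measure (Torus n))] 0 := phi_ae_zero φ key
  have hφ0 : φ = 0 := by
    apply Lp.ext
    exact hae.trans (Lp.coeFn_zero _ _ _).symm
  refine ⟨hφ0, ?_⟩
  -- Step 3: T = 0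
  refine ContinuousLinearMap.ext fun f => ?_
  have hTf : ∀ g : hardyT n, (inner ℂ ((g : L2T n)) ((T f : hardyT n) : L2T n) : ℂ) = 0 := by
    intro g
    rw [hT f g]
    have : ∀ᵐ x ∂(volume : Measure (Torus n)),
        conj ((g : L2T n) x) * (φ x * (f : L2T n) x) = 0 := by
      filter_upwards [hae] with x hx
      rw [hx]
      simp
    rw [integral_congr_ae this, integral_zero]
  have h2 : (inner ℂ (((T f : hardyT n) : L2T n)) (((T f : hardyT n) : L2T n)) : ℂ) = 0 :=
    hTf (T f)
  have h3 : ((T f : hardyT n) : L2T n) = 0 := inner_self_eq_zero.mp h2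
  have h4 : T f = 0 := ZeroMemClass.coe_eq_zero.mp h3
  rw [ContinuousLinearMap.zero_apply]
  exact h4
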